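/- Let γ > 1 and consider the Cauchy problem for the conservative ideal MHD system with smooth initial data ρ = 1, p(x,0) = 1 - exp(-|x|²), v = (1,1,1), B = (1 + (ε/3)arctan x₁, 1 + (ε/3)arctan x₂, 1 + (ε/3)arctan x₃), ε > 0. Assume a smooth solution exists on [0, t*). For smooth solutions the pressure satisfies p_t + v·∇p + γp ∇·v + (γ-1)(v·B)∇·B = 0. Then at x = 0, t = 0 one has ∇p = 0, ∇·v = 0, ∇·B = ε, p(0,0) = 0, and hence p_t(0,0) = -3(γ-1)ε < 0; consequently there exists t₀ ∈ (0, t*) with p(0, t) < 0 for all t ∈ (0, t₀). -/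

import Mathlib

open Real

lemma auxA : HasFDerivAt (fun y : Fin 3 → ℝ => 1 - Real.exp (-(∑ i, (y i) ^ 2)))
    (0 : (Fin 3 → ℝ) →L[ℝ] ℝ) 0 := by
  have hsq : ∀ i : Fin 3, HasFDerivAt (fun y : Fin 3 → ℝ => (y i) ^ 2)
      (0 : (Fin 3 → ℝ) →L[ℝ] ℝ) 0 := by
    intro i
    have h := (ContinuousLinearMap.proj i : (Fin 3 → ℝ) →L[ℝ] ℝ).hasFDerivAt (x := 0)
    have := h.mul h
    refine (this.congr_fderiv ?_).congr_of_eventuallyEq (Filter.EventuallyEq.of_eq (funext fun y => ?_))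
    · simp
    · simp [sq]
  have hsum : HasFDerivAt (fun y : Fin 3 → ℝ => ∑ i, (y i) ^ 2)
      (0 : (Fin 3 → ℝ) →L[ℝ] ℝ) 0 := by
    have := HasFDerivAt.fun_sum (fun i (_ : i ∈ Finset.univ) => hsq i)
    simpa using this
  have hexp := (hsum.neg).exp
  have := hexp.const_sub 1
  refine this.congr_fderiv ?_
  simp

lemma auxB (c : ℝ) (i : Fin 3) : HasFDerivAt (fun y : Fin 3 → ℝ => 1 + c * Real.arctan (y i))
    (c • (ContinuousLinearMap.proj i : (Fin 3 → ℝ) →L[ℝ] ℝ)) 0 := by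
  have h := (ContinuousLinearMap.proj i : (Fin 3 → ℝ) →L[ℝ] ℝ).hasFDerivAt (x := 0)
  have := (h.arctan.const_mul c).const_add 1
  refine this.congr_fderiv ?_
  simp [smul_smul]


/-- For the conservative ideal MHD system with the given smooth initial
data (ρ = 1, p = 1 - exp(-|x|²), v = (1,1,1), B_i = 1 + (ε/3)arctan x_i), whose
initial divergence of B at the origin is ε > 0, the pressure equation
p_t + v·∇p + γp∇·v + (γ-1)(v·B)∇·B = 0 forces p_t(0,0) = -3(γ-1)ε < 0; since
p(0,0) = 0, there is t₀ ∈ (0, t*) with p(0, t) < 0 for all t ∈ (0, t₀). -/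
theorem negative_pressure_if_divB_nonzero
    (γ ε tstar : ℝ) (hγ : 1 < γ) (hε : 0 < ε) (htstar : 0 < tstar)
    (p : (Fin 3 → ℝ) → ℝ → ℝ) (v B : (Fin 3 → ℝ) → ℝ → Fin 3 → ℝ)
    -- initial data:
    (hp0 : ∀ x, p x 0 = 1 - Real.exp (-(∑ i, (x i) ^ 2)))
    (hv0 : ∀ x i, v x 0 i = 1)
    (hB0 : ∀ x i, B x 0 i = 1 + (ε / 3) * Real.arctan (x i))
    -- smoothness of t ↦ p(0, t) at t = 0:
    (hsmooth : DifferentiableAt ℝ (fun t => p 0 t) 0)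
    -- the pressure equation for smooth solutions, on 0 ≤ t < t*:
    (hPDE : ∀ x t, 0 ≤ t → t < tstar →
      deriv (fun s => p x s) t
        + (∑ i, v x t i * fderiv ℝ (fun y => p y t) x (Pi.single i 1))
        + γ * p x t * (∑ i, fderiv ℝ (fun y => v y t i) x (Pi.single i 1))
        + (γ - 1) * (∑ i, v x t i * B x t i)
            * (∑ i, fderiv ℝ (fun y => B y t i) x (Pi.single i 1)) = 0) :
    deriv (fun t => p 0 t) 0 = -(3 * (γ - 1) * ε) ∧
    ∃ t₀, 0 < t₀ ∧ t₀ < tstar ∧ ∀ t, 0 < t → t < t₀ → p 0 t < 0 := by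
    -- evaluate the PDE at x = 0, t = 0
  have hp00 : p 0 0 = 0 := by simp [hp0]
  have hpfun : (fun y : Fin 3 → ℝ => p y 0) = fun y => 1 - Real.exp (-(∑ i, (y i) ^ 2)) := by
    funext y; exact hp0 y
  have hpderiv : fderiv ℝ (fun y => p y 0) 0 = 0 := by
    rw [hpfun]; exact auxA.fderiv
  have hBderiv : ∀ i : Fin 3, fderiv ℝ (fun y : Fin 3 → ℝ => 1 + ε / 3 * Real.arctan (y i)) 0 (Pi.single i 1) = ε / 3 := by
    intro i
    rw [(auxB (ε / 3) i).fderiv]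
    simp
  have heq := hPDE 0 0 le_rfl htstar
  rw [hp00, hpderiv] at heq
  simp only [hv0, hB0, Pi.zero_apply, Real.arctan_zero, mul_zero, add_zero, one_mul,
    ContinuousLinearMap.zero_apply, mul_zero, zero_mul, Finset.sum_const, Finset.card_univ,
    Fintype.card_fin, nsmul_eq_mul] at heq
  rw [Finset.sum_congr rfl (fun i _ => hBderiv i)] at heq
  simp only [Finset.sum_const, Finset.card_univ, Fintype.card_fin, nsmul_eq_mul] at heq
  push_cast at heq
  have hderiv : deriv (fun t => p 0 t) 0 = -(3 * (γ - 1) * ε) := by linarith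
  refine ⟨hderiv, ?_⟩
  -- negativity for small positive t
  have hneg : deriv (fun t => p 0 t) 0 < 0 := by
    rw [hderiv]
    nlinarith [mul_pos (sub_pos.mpr hγ) hε]
  have hslope : Filter.Tendsto (slope (fun t => p 0 t) 0) (nhdsWithin 0 {(0:ℝ)}ᶜ)
      (nhds (deriv (fun t => p 0 t) 0)) :=
    (hasDerivAt_iff_tendsto_slope.mp hsmooth.hasDerivAt)
  have hev : ∀ᶠ s in nhdsWithin 0 {(0:ℝ)}ᶜ, slope (fun t => p 0 t) 0 s < 0 :=
    hslope.eventually (Filter.Tendsto.eventually_lt_const hneg Filter.tendsto_id)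
  rw [Filter.eventually_iff, mem_nhdsWithin] at hev
  obtain ⟨U, hUopen, hU0, hUsub⟩ := hev
  obtain ⟨δ, hδpos, hδsub⟩ := Metric.isOpen_iff.mp hUopen 0 hU0
  refine ⟨min δ (tstar / 2), lt_min hδpos (by linarith), (min_le_right _ _).trans_lt (by linarith), ?_⟩
  intro t ht htlt
  have htδ : t < δ := htlt.trans_le (min_le_left _ _)
  have htU : t ∈ U ∩ {(0:ℝ)}ᶜ := by
    constructor
    · apply hδsub
      simp [Real.dist_eq, abs_of_pos ht, htδ]
    · exact ne_of_gt ht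
  have hs := hUsub htU
  simp only [Set.mem_setOf_eq, slope_def_field] at hs
  rw [hp00] at hs
  have : p 0 t / t < 0 := by
    simpa [div_eq_iff, sub_zero] using hs
  rcases div_neg_iff.mp this with h | h
  · linarith [h.2]
  · exact h.1
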